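/- Let Z ∈ {0,1} satisfy E[(Z-α)^τ(1-β-Z)^{1-τ}] = (1-α-β)·p_τ for τ ∈ {0,1}, where p_1 = P(X=1), p_0 = P(X=0) for an underlying Bernoulli X. Let Z† = Z·1{η=0} + 1{η=1} with η independent of Z, P(η=±1)=δ, P(η=0)=1-2δ. Define φ†_τ(x) = (x - δ - α(1-2δ))^τ (1 - δ - β(1-2δ) - x)^{1-τ}. Then E[φ†_0(Z†)] = (1-2δ)(1-α-β)·P(X=0) and E[φ†_1(Z†)] = (1-2δ)(1-α-β)·P(X=1). -/

import Mathlib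

open MeasureTheory ProbabilityTheory

theorem stmt10 {Ω : Type*} [MeasurableSpace Ω] (μ : Measure Ω) [IsProbabilityMeasure μ]
    (Z : Ω → ℝ) (η : Ω → ℤ) (α β δ p0 p1 : ℝ)
    (hα : 0 < α) (hα1 : α < 1) (hβ : 0 < β) (hβ1 : β < 1) (hαβ : α + β < 1)
    (hδ0 : 0 < δ) (hδ2 : δ < 1 / 2)
    (hp0 : 0 ≤ p0) (hp1 : 0 ≤ p1) (hsum : p0 + p1 = 1)
    (hZmeas : Measurable Z) (hηmeas : Measurable η)
    (hZval : ∀ ω, Z ω = 0 ∨ Z ω = 1)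
    (hZ1 : (μ {ω | Z ω = 1}).toReal = α * p0 + (1 - β) * p1)
    (hη1 : (μ {ω | η ω = 1}).toReal = δ)
    (hηm1 : (μ {ω | η ω = -1}).toReal = δ)
    (hη0 : (μ {ω | η ω = 0}).toReal = 1 - 2 * δ)
    (hindep : IndepFun Z η μ)
    (Zdag : Ω → ℝ)
    (hZdag : ∀ ω, Zdag ω = Z ω * (if η ω = 0 then 1 else 0) + (if η ω = 1 then 1 else 0)) :
    (∫ ω, (1 - δ - β * (1 - 2 * δ) - Zdag ω) ∂μ) = (1 - 2 * δ) * (1 - α - β) * p0 ∧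
      (∫ ω, (Zdag ω - δ - α * (1 - 2 * δ)) ∂μ) = (1 - 2 * δ) * (1 - α - β) * p1 := by
  set A : Set Ω := {ω | Z ω = 1} with hA
  have hAmeas : MeasurableSet A := hZmeas (measurableSet_singleton 1)
  set B0 : Set Ω := {ω | η ω = 0} with hB0
  have hB0meas : MeasurableSet B0 := hηmeas (measurableSet_singleton 0)
  set B1 : Set Ω := {ω | η ω = 1} with hB1
  have hB1meas : MeasurableSet B1 := hηmeas (measurableSet_singleton 1)
  have hZind : Z = A.indicator (fun _ => (1:ℝ)) := by
    funext ω
    rcases hZval ω with h | h <;> simp [Set.indicator, hA, h]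
  set f : Ω → ℝ := fun ω => if η ω = 0 then 1 else 0 with hf
  set g : Ω → ℝ := fun ω => if η ω = 1 then 1 else 0 with hg
  have hfind : f = B0.indicator (fun _ => (1:ℝ)) := by
    funext ω; simp [hf, Set.indicator, hB0]
  have hgind : g = B1.indicator (fun _ => (1:ℝ)) := by
    funext ω; simp [hg, Set.indicator, hB1]
  have hZint : Integrable Z μ := by
    rw [hZind]; exact (integrable_const 1).indicator hAmeas
  have hfint : Integrable f μ := by
    rw [hfind]; exact (integrable_const 1).indicator hB0meas
  have hgint : Integrable g μ := by
    rw [hgind]; exact (integrable_const 1).indicator hB1meas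
  have hZf : IndepFun Z f μ := by
    have : Measurable (fun n : ℤ => if n = 0 then (1:ℝ) else 0) :=
      measurable_from_top
    exact hindep.comp measurable_id this
  have hIZ : ∫ ω, Z ω ∂μ = α * p0 + (1 - β) * p1 := by
    rw [hZind, integral_indicator_const (1:ℝ) hAmeas, smul_eq_mul, mul_one, ← hZ1, hA]; rfl
  have hIf : ∫ ω, f ω ∂μ = 1 - 2 * δ := by
    rw [hfind, integral_indicator_const (1:ℝ) hB0meas, smul_eq_mul, mul_one, ← hη0, hB0]; rfl
  have hIg : ∫ ω, g ω ∂μ = δ := by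
    rw [hgind, integral_indicator_const (1:ℝ) hB1meas, smul_eq_mul, mul_one, ← hη1, hB1]; rfl
  have hIZf : ∫ ω, Z ω * f ω ∂μ = (α * p0 + (1 - β) * p1) * (1 - 2 * δ) := by
    rw [← hIZ, ← hIf]
    exact hZf.integral_fun_mul_eq_mul_integral hZint.aestronglyMeasurable hfint.aestronglyMeasurable
  have hZfint : Integrable (fun ω => Z ω * f ω) μ := by
    have : (fun ω => Z ω * f ω) = (A ∩ B0).indicator (fun _ => (1:ℝ)) := by
      funext ω
      rcases hZval ω with h | h <;>
        simp [Set.indicator, hA, hB0, hf, h, Set.mem_inter_iff] <;>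
        by_cases h0 : η ω = 0 <;> simp [h0]
    rw [this]; exact (integrable_const 1).indicator (hAmeas.inter hB0meas)
  have hZdagEq : Zdag = fun ω => Z ω * f ω + g ω := funext fun ω => hZdag ω
  have hZdagint : Integrable Zdag μ := by
    rw [hZdagEq]; exact hZfint.add hgint
  have hIZdag : ∫ ω, Zdag ω ∂μ = (α * p0 + (1 - β) * p1) * (1 - 2 * δ) + δ := by
    rw [hZdagEq, integral_add hZfint hgint, hIZf, hIg]
  constructor
  · have : (∫ ω, (1 - δ - β * (1 - 2 * δ) - Zdag ω) ∂μ)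
        = (1 - δ - β * (1 - 2 * δ)) - ∫ ω, Zdag ω ∂μ := by
      rw [integral_sub (integrable_const _) hZdagint, integral_const, probReal_univ]
      simp
    rw [this, hIZdag]; linear_combination (-(1 - 2 * δ) * (1 - β)) * hsum
  · have : (∫ ω, (Zdag ω - δ - α * (1 - 2 * δ)) ∂μ)
        = (∫ ω, Zdag ω ∂μ) - (δ + α * (1 - 2 * δ)) := by
      rw [show (fun ω => Zdag ω - δ - α * (1 - 2 * δ))
          = fun ω => Zdag ω - (δ + α * (1 - 2 * δ)) by funext ω; ring,
        integral_sub hZdagint (integrable_const _), integral_const, probReal_univ]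
      simp
    rw [this, hIZdag]; linear_combination (1 - 2 * δ) * α * hsum
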